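/- arXiv:1212.6162 — 2 statements merged into one kernel-verified Lean document; each statement's English description precedes it below -/
import Mathlib

section
/- For every integer k ≥ 0 and every ξ ∈ ℝ with 0 < |ξ| < 1, ∫_{-1}^{1} η^k (ξ² + 1 − 2ξη)^{-1/2} dη = Σ_{n=0}^{k} F_{n+1, k+1} ξⁿ; in particular this integral is a polynomial of degree at most k in ξ. -/
open Polynomial

/-- The n-th Legendre polynomial, defined via the Rodrigues formula
P_n(eta) = (1/(2^n n!)) d^n/d eta^n (eta^2 - 1)^n. -/
noncomputable def legendre (n : ℕ) : Polynomial ℝ :=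
  ((1 : ℝ) / (2 ^ n * n.factorial)) • (Polynomial.derivative^[n] ((X ^ 2 - 1) ^ n))

/-- The matrix of moments of the Legendre polynomials:
F i j = ∫_{-1}^{1} P_{i-1}(eta) eta^{j-1} d eta (intended for i, j ≥ 1). -/
noncomputable def Fmat (i j : ℕ) : ℝ :=
  ∫ η in (-1 : ℝ)..1, (legendre (i - 1)).eval η * η ^ (j - 1)

lemma aux_dvd (n j : ℕ) (hj : j ≤ n) :
    ∃ Q : Polynomial ℝ, derivative^[j] ((X ^ 2 - 1) ^ n) = (X ^ 2 - 1) ^ (n - j) * Q := by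
  induction j with
  | zero => exact ⟨1, by simp⟩
  | succ j ih =>
    obtain ⟨Q, hQ⟩ := ih (Nat.le_of_succ_le hj)
    obtain ⟨m, hm⟩ : ∃ m, n - j = m + 1 := ⟨n - j - 1, by omega⟩
    refine ⟨C ((n - j : ℕ) : ℝ) * derivative ((X : Polynomial ℝ)^2 - 1) * Q
      + ((X : Polynomial ℝ)^2 - 1) * derivative Q, ?_⟩
    have h2 : n - (j+1) = m := by omega
    rw [Function.iterate_succ_apply', hQ, derivative_mul, derivative_pow, h2, hm]
    ring_nf
    rw [Nat.add_sub_cancel_left]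

lemma eval_iter_deriv_zero (n j : ℕ) (hj : j < n) (x : ℝ) (hx : x ^ 2 = 1) :
    (derivative^[j] ((X ^ 2 - 1) ^ n : Polynomial ℝ)).eval x = 0 := by
  obtain ⟨Q, hQ⟩ := aux_dvd n j hj.le
  rw [hQ]
  simp [hx, zero_pow (show n - j ≠ 0 by omega)]

lemma poly_ibp (p q : Polynomial ℝ) :
    ∫ x in (-1:ℝ)..1, p.eval x * (derivative q).eval x =
      p.eval 1 * q.eval 1 - p.eval (-1) * q.eval (-1) -
        ∫ x in (-1:ℝ)..1, (derivative p).eval x * q.eval x := by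
  refine intervalIntegral.integral_mul_deriv_eq_deriv_mul
    (u := fun x => p.eval x) (v := fun x => q.eval x)
    (u' := fun x => (derivative p).eval x) (v' := fun x => (derivative q).eval x)
    (fun x _ => p.hasDerivAt x) (fun x _ => q.hasDerivAt x) ?_ ?_
  · exact ((derivative p).continuous_aeval).intervalIntegrable _ _
  · exact ((derivative q).continuous_aeval).intervalIntegrable _ _

lemma iter_ibp (n : ℕ) (q : Polynomial ℝ) (j : ℕ) (hj : j ≤ n) :
    (∫ x in (-1:ℝ)..1, (derivative^[n] ((X ^ 2 - 1) ^ n : Polynomial ℝ)).eval x * q.eval x) =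
      (-1)^j * ∫ x in (-1:ℝ)..1,
        (derivative^[n-j] ((X ^ 2 - 1) ^ n : Polynomial ℝ)).eval x * (derivative^[j] q).eval x := by
  induction j with
  | zero => simp
  | succ j ih =>
    rw [ih (Nat.le_of_succ_le hj)]
    obtain ⟨m, hm⟩ : ∃ m, n - j = m + 1 := ⟨n - j - 1, by omega⟩
    have h2 : n - (j+1) = m := by omega
    have key : (∫ x in (-1:ℝ)..1,
        (derivative^[n-j] ((X ^ 2 - 1) ^ n : Polynomial ℝ)).eval x * (derivative^[j] q).eval x) =
        - ∫ x in (-1:ℝ)..1,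
        (derivative^[m] ((X ^ 2 - 1) ^ n : Polynomial ℝ)).eval x * (derivative^[j+1] q).eval x := by
      have hb1 := eval_iter_deriv_zero n m (by omega) 1 (by norm_num)
      have hb2 := eval_iter_deriv_zero n m (by omega) (-1) (by norm_num)
      have := poly_ibp (derivative^[j] q) (derivative^[m] ((X ^ 2 - 1) ^ n : Polynomial ℝ))
      rw [hm, Function.iterate_succ_apply']
      rw [show (∫ x in (-1:ℝ)..1,
          (derivative (derivative^[m] ((X ^ 2 - 1) ^ n : Polynomial ℝ))).eval x *
            (derivative^[j] q).eval x) =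
          ∫ x in (-1:ℝ)..1, (derivative^[j] q).eval x *
            (derivative (derivative^[m] ((X ^ 2 - 1) ^ n : Polynomial ℝ))).eval x by
        congr 1; ext x; ring]
      rw [this, hb1, hb2, Function.iterate_succ_apply']
      rw [show (∫ x in (-1:ℝ)..1, (derivative (derivative^[j] q)).eval x *
          (derivative^[m] ((X ^ 2 - 1) ^ n : Polynomial ℝ)).eval x) =
          ∫ x in (-1:ℝ)..1, (derivative^[m] ((X ^ 2 - 1) ^ n : Polynomial ℝ)).eval x *
            (derivative (derivative^[j] q)).eval x by
        congr 1; ext x; ring]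
      ring
    rw [key, h2, pow_succ]
    ring

lemma Fmat_eq (k n : ℕ) (hn : n ≤ k) :
    Fmat (n+1) (k+1) = (k.choose n : ℝ) / 2^n *
      ∫ t in (-1:ℝ)..1, (1 - t^2)^n * t^(k-n) := by
  have h1 : Fmat (n+1) (k+1) = (1 / (2^n * n.factorial : ℝ)) *
      ∫ η in (-1:ℝ)..1, (derivative^[n] ((X ^ 2 - 1) ^ n : Polynomial ℝ)).eval η *
        ((X : Polynomial ℝ)^k).eval η := by
    rw [Fmat, ← intervalIntegral.integral_const_mul]
    simp [legendre, mul_assoc]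
  rw [h1, iter_ibp n _ n le_rfl, Nat.sub_self, Function.iterate_zero_apply,
    iterate_derivative_X_pow_eq_natCast_mul]
  have h3 : (∫ x in (-1:ℝ)..1, ((X ^ 2 - 1) ^ n : Polynomial ℝ).eval x *
      ((Nat.descFactorial k n : Polynomial ℝ) * X ^ (k - n)).eval x) =
      ((-1)^n * (Nat.descFactorial k n : ℝ)) *
        ∫ t in (-1:ℝ)..1, (1 - t^2)^n * t^(k-n) := by
    rw [← intervalIntegral.integral_const_mul]
    congr 1
    ext x
    simp only [eval_mul, eval_pow, eval_sub, eval_X, eval_one, eval_natCast]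
    rw [show (x^2 - 1 : ℝ) = -(1 - x^2) by ring, neg_pow]
    ring
  rw [h3]
  have h4 : (Nat.descFactorial k n : ℝ) = (n.factorial : ℝ) * (k.choose n : ℝ) := by
    rw [← Nat.cast_mul, ← Nat.descFactorial_eq_factorial_mul_choose]
  rw [h4]
  have h5 : ((-1:ℝ))^n * (-1)^n = 1 := by
    rw [← pow_add]; exact Even.neg_one_pow (by exact Even.add_self n)
  set I := ∫ t in (-1:ℝ)..1, (1 - t^2)^n * t^(k-n) with hI
  field_simp
  linear_combination ((k.choose n : ℝ) * I) * h5

lemma lhs_eq (k : ℕ) (ξ : ℝ) (hξ1 : |ξ| < 1) :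
    (∫ η in (-1 : ℝ)..1, η ^ k * (Real.sqrt (ξ ^ 2 + 1 - 2 * ξ * η))⁻¹) =
      ∫ t in (-1:ℝ)..1, (ξ/2*(1-t^2) + t)^k := by
  have hpos : ∀ t ∈ Set.uIcc (-1:ℝ) 1, 0 < 1 - ξ*t := by
    intro t ht
    rw [Set.uIcc_of_le (by norm_num)] at ht
    have h1 : |ξ*t| < 1 := by
      rw [abs_mul]
      calc |ξ| * |t| ≤ |ξ| * 1 := by
            apply mul_le_mul_of_nonneg_left _ (abs_nonneg _)
            rw [abs_le]; exact ⟨ht.1, ht.2⟩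
        _ < 1 := by simpa using hξ1
    have := (abs_lt.mp h1).2
    linarith
  have hsq : ∀ t : ℝ, ξ ^ 2 + 1 - 2 * ξ * (t + ξ/2*(1-t^2)) = (1 - ξ*t)^2 := by
    intro t; ring
  have hderiv : ∀ t ∈ Set.uIcc (-1:ℝ) 1,
      HasDerivAt (fun t : ℝ => t + ξ/2*(1-t^2)) (1 - ξ*t) t := by
    intro t _
    have h1 : HasDerivAt (fun x : ℝ => x + ξ/2*(1-x^2)) (1 + ξ/2 * (-(2*t^1))) t :=
      (hasDerivAt_id t).add (((hasDerivAt_pow 2 t).const_sub 1).const_mul (ξ/2))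
    convert h1 using 1
    ring
  have hcont : ContinuousOn (fun η : ℝ => η ^ k * (Real.sqrt (ξ ^ 2 + 1 - 2 * ξ * η))⁻¹)
      ((fun t : ℝ => t + ξ/2*(1-t^2)) '' Set.uIcc (-1:ℝ) 1) := by
    rintro y ⟨t, ht, rfl⟩
    have hp : 0 < ξ ^ 2 + 1 - 2 * ξ * (t + ξ/2*(1-t^2)) := by
      rw [hsq t]; exact pow_pos (hpos t ht) 2
    apply ContinuousAt.continuousWithinAt
    apply ContinuousAt.mul (continuousAt_pow _ _)
    apply ContinuousAt.inv₀
    · exact (Real.continuous_sqrt.continuousAt).comp (by fun_prop)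
    · exact ne_of_gt (Real.sqrt_pos.mpr hp)
  have hsub := intervalIntegral.integral_comp_smul_deriv' (a := (-1:ℝ)) (b := 1)
    hderiv (by fun_prop) hcont
  norm_num at hsub
  rw [← hsub]
  apply intervalIntegral.integral_congr
  intro t ht
  have h1 : 0 < 1 - ξ*t := hpos t ht
  simp only [smul_eq_mul, Function.comp_apply]
  rw [hsq t, Real.sqrt_sq h1.le]
  rw [show (t + ξ/2*(1-t^2)) = ξ/2*(1-t^2) + t by ring]
  field_simp

/-- For 0 < |xi| < 1, the integral ∫_{-1}^1 eta^k (xi^2 + 1 - 2 xi eta)^(-1/2) d eta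
is the polynomial Σ_{n=0}^{k} F_{n+1,k+1} xi^n of degree at most k in xi. -/
theorem stmt_13 (k : ℕ) (ξ : ℝ) (hξ0 : 0 < |ξ|) (hξ1 : |ξ| < 1) :
    (∫ η in (-1 : ℝ)..1, η ^ k * (Real.sqrt (ξ ^ 2 + 1 - 2 * ξ * η))⁻¹) =
      ∑ n ∈ Finset.range (k + 1), Fmat (n + 1) (k + 1) * ξ ^ n := by
  rw [lhs_eq k ξ hξ1]
  have hexp : ∀ t : ℝ, (ξ/2*(1-t^2) + t)^k =
      ∑ n ∈ Finset.range (k + 1), (ξ/2*(1-t^2))^n * t^(k-n) * (k.choose n : ℝ) := by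
    intro t
    rw [add_pow]
  calc (∫ t in (-1:ℝ)..1, (ξ/2*(1-t^2) + t)^k)
      = ∫ t in (-1:ℝ)..1, ∑ n ∈ Finset.range (k + 1),
          (ξ/2*(1-t^2))^n * t^(k-n) * (k.choose n : ℝ) := by
        apply intervalIntegral.integral_congr
        intro t _; exact hexp t
    _ = ∑ n ∈ Finset.range (k + 1), ∫ t in (-1:ℝ)..1,
          (ξ/2*(1-t^2))^n * t^(k-n) * (k.choose n : ℝ) := by
        apply intervalIntegral.integral_finset_sum
        intro n _
        exact (Continuous.intervalIntegrable (by fun_prop) _ _)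
    _ = ∑ n ∈ Finset.range (k + 1), Fmat (n + 1) (k + 1) * ξ ^ n := by
        apply Finset.sum_congr rfl
        intro n hn
        have hnk : n ≤ k := by
          have := Finset.mem_range.mp hn; omega
        rw [Fmat_eq k n hnk]
        have h1 : ∀ t : ℝ, (ξ/2*(1-t^2))^n * t^(k-n) * (k.choose n : ℝ) =
            ((k.choose n : ℝ) * (ξ/2)^n) * ((1-t^2)^n * t^(k-n)) := by
          intro t; rw [mul_pow]; ring
        simp only [h1]
        rw [intervalIntegral.integral_const_mul]
        rw [div_pow]
        ring
end

section
/- (Theorem 2: dipole moments of higher orders of a conducting ball.) Under the stated hypotheses, for every natural number m, ∫_{-r}^{r} z^m ( Σ_{j=1}^{n+1} c_j z^{j-1} ) dz = (r^{m+1}/2) Σ_{i} (2i − 1) r^{i-1} F_{i, m+1} b_i, where the sum runs over integers i with δ ≤ i ≤ m + 1 and i ≡ m + 1 (mod 2), with δ = 1 if m is even and δ = 2 if m is odd, and where b_i := 0 for i > n + 1. Physically: the dipole moment of order m, D_m = 2πr ∫_{-r}^{r} z^m σ(z) dz, equals 2πε₀ r^{m+1} Σ_{i=δ,(2)}^{m+1}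 (2i − 1) r^{i-1} F_{i, m+1} b_i. -/
open Polynomial

open intervalIntegral

noncomputable def Ip (p : Polynomial ℝ) : ℝ := ∫ x in (-1:ℝ)..1, p.eval x

noncomputable def Wp (k : ℕ) : Polynomial ℝ := (X ^ 2 - 1) ^ k

lemma intInt (p : Polynomial ℝ) (a b : ℝ) :
    IntervalIntegrable (fun x => p.eval x) MeasureTheory.volume a b :=
  (p.continuous_aeval).intervalIntegrable a b

lemma Ip_zero : Ip 0 = 0 := by simp [Ip]

lemma Ip_add (p q : Polynomial ℝ) : Ip (p + q) = Ip p + Ip q := by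
  simp only [Ip, eval_add]
  exact integral_add (intInt p _ _) (intInt q _ _)

lemma Ip_smul (a : ℝ) (p : Polynomial ℝ) : Ip (a • p) = a * Ip p := by
  simp only [Ip, eval_smul, smul_eq_mul]
  exact integral_const_mul a _

lemma Ip_natmul (n : ℕ) (p : Polynomial ℝ) : Ip ((n : Polynomial ℝ) * p) = n * Ip p := by
  rw [← map_natCast (C : ℝ →+* Polynomial ℝ) n, ← smul_eq_C_mul, Ip_smul]

lemma Ip_sum {s : Finset ℕ} (f : ℕ → Polynomial ℝ) :
    Ip (∑ i ∈ s, f i) = ∑ i ∈ s, Ip (f i) := by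
  simp only [Ip, eval_finset_sum]
  exact integral_finset_sum (fun i _ => intInt (f i) _ _)

lemma Ip_deriv (p : Polynomial ℝ) : Ip (derivative p) = p.eval 1 - p.eval (-1) := by
  simp only [Ip]
  exact integral_deriv_eq_sub' (fun x => p.eval x)
    (funext fun x => (p.hasDerivAt x).deriv)
    (fun x _ => (p.hasDerivAt x).differentiableAt)
    (p.derivative.continuous_aeval).continuousOn

lemma Ip_parts (p q : Polynomial ℝ) :
    Ip (derivative p * q) = (p * q).eval 1 - (p * q).eval (-1) - Ip (p * derivative q) := by
  have h := Ip_deriv (p * q)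
  rw [derivative_mul, Ip_add] at h
  linarith

lemma Ip_pow (d : ℕ) : Ip (X ^ d) = (1 - (-1:ℝ) ^ (d + 1)) / (d + 1) := by
  simp only [Ip, eval_pow, eval_X]
  rw [integral_pow]
  norm_num

lemma exists_factor (k : ℕ) : ∀ j, j ≤ k → ∃ g : Polynomial ℝ,
    derivative^[j] (Wp k) = (X ^ 2 - 1) ^ (k - j) * g := by
  intro j
  induction j with
  | zero => intro _; exact ⟨1, by simp [Wp]⟩
  | succ j ih =>
    intro hj
    obtain ⟨g, hg⟩ := ih (Nat.le_of_succ_le hj)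
    obtain ⟨t, ht⟩ : ∃ t, k - j = t + 1 := ⟨k - (j+1), by omega⟩
    have ht2 : k - (j+1) = t := by omega
    refine ⟨(((t:ℕ) + 1 : ℕ) : Polynomial ℝ) * (2*X) * g + (X^2-1) * derivative g, ?_⟩
    rw [Function.iterate_succ_apply', hg, ht, ht2]
    rw [derivative_mul, derivative_pow]
    simp only [derivative_sub, derivative_one, derivative_X_pow, Nat.add_sub_cancel, sub_zero,
      C_eq_natCast, map_ofNat]
    push_cast
    ring

lemma eval_iter_deriv_W (k j : ℕ) (hj : j < k) (x : ℝ) (hx : x = 1 ∨ x = -1) :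
    (derivative^[j] (Wp k)).eval x = 0 := by
  obtain ⟨g, hg⟩ := exists_factor k j hj.le
  have h0 : x ^ 2 - 1 = 0 := by rcases hx with h | h <;> rw [h] <;> ring
  rw [hg]
  simp only [eval_mul, eval_pow, eval_sub, eval_one, eval_X]
  rw [h0, zero_pow (by omega), zero_mul]

lemma Ip_iter_parts (k : ℕ) (q : Polynomial ℝ) :
    Ip (derivative^[k] (Wp k) * q) = (-1:ℝ)^k * Ip (Wp k * derivative^[k] q) := by
  suffices h : ∀ j, j ≤ k → ∀ q : Polynomial ℝ, Ip (derivative^[k] (Wp k) * q)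
      = (-1:ℝ)^j * Ip (derivative^[k-j] (Wp k) * derivative^[j] q) by
    simpa using h k le_rfl q
  intro j
  induction j with
  | zero => intro _ q; simp
  | succ j ih =>
    intro hj q
    rw [ih (by omega) q]
    have hs : derivative^[k-j] (Wp k) = derivative (derivative^[k-(j+1)] (Wp k)) := by
      rw [show k - j = (k - (j+1)) + 1 from by omega]
      exact Function.iterate_succ_apply' _ _ _
    rw [hs, Ip_parts, eval_mul, eval_mul,
      eval_iter_deriv_W k _ (by omega) 1 (Or.inl rfl),
      eval_iter_deriv_W k _ (by omega) (-1) (Or.inr rfl),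
      show derivative (derivative^[j] q) = derivative^[j+1] q from
        (Function.iterate_succ_apply' _ _ _).symm, pow_succ]
    ring

lemma Ip_legendre_mul (k : ℕ) (q : Polynomial ℝ) :
    Ip (legendre k * q)
      = ((-1:ℝ)^k / (2^k * k.factorial)) * Ip (Wp k * derivative^[k] q) := by
  have : legendre k = ((1 : ℝ) / (2 ^ k * k.factorial)) • (derivative^[k] (Wp k)) := rfl
  rw [this, smul_mul_assoc, Ip_smul, Ip_iter_parts]
  ring

lemma Ip_legendre_lowdeg (k : ℕ) (q : Polynomial ℝ) (hq : q.natDegree < k) :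
    Ip (legendre k * q) = 0 := by
  rw [Ip_legendre_mul, iterate_derivative_eq_zero hq, mul_zero, Ip_zero, mul_zero]

noncomputable def Wint (k : ℕ) : ℝ := Ip (Wp k)

lemma Wint_zero : Wint 0 = 2 := by
  norm_num [Wint, Wp, Ip]

lemma Wint_succ (k : ℕ) :
    (2*(k:ℝ)+3) * Wint (k+1) = -((2*(k:ℝ)+2)) * Wint k := by
  have key : derivative (X * Wp (k+1))
      = ((2*k+3 : ℕ) : Polynomial ℝ) * Wp (k+1) + ((2*k+2 : ℕ) : Polynomial ℝ) * Wp k := by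
    simp only [Wp, derivative_mul, derivative_pow, derivative_X, derivative_sub,
      derivative_one, derivative_X_pow, C_eq_natCast, map_ofNat, Nat.add_sub_cancel,
      sub_zero, one_mul, mul_one]
    push_cast
    ring
  have h1 := Ip_deriv (X * Wp (k+1))
  rw [key, Ip_add, Ip_natmul, Ip_natmul] at h1
  have e1 : (X * Wp (k+1)).eval 1 = 0 := by norm_num [Wp]
  have e2 : (X * Wp (k+1)).eval (-1) = 0 := by norm_num [Wp]
  rw [e1, e2] at h1
  push_cast at h1
  unfold Wint
  linarith

lemma Wint_eq (k : ℕ) :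
    Wint k = (-1:ℝ)^k * 2^(2*k+1) * (k.factorial)^2 / (2*k+1).factorial := by
  induction k with
  | zero => simpa using Wint_zero
  | succ k ih =>
    have h := Wint_succ k
    rw [ih] at h
    have h3 : (2*(k:ℝ)+3) ≠ 0 := by positivity
    have f1 : ((k+1).factorial : ℝ) = ((k:ℝ)+1) * k.factorial := by
      rw [Nat.factorial_succ]; push_cast; ring
    have f2 : ((2*(k+1)+1).factorial : ℝ)
        = (2*(k:ℝ)+3) * ((2*(k:ℝ)+2) * (2*k+1).factorial) := by
      rw [show 2*(k+1)+1 = (2*k+1) + 1 + 1 from by omega, Nat.factorial_succ,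
        Nat.factorial_succ]
      push_cast; ring
    have hf : ((2*k+1).factorial : ℝ) ≠ 0 := by
      exact_mod_cast (Nat.factorial_pos _).ne'
    rw [f2, f1]
    have hWval : Wint (k+1)
        = -((2*(k:ℝ)+2)) * ((-1:ℝ)^k * 2^(2*k+1) * (k.factorial)^2 / (2*k+1).factorial)
          / (2*(k:ℝ)+3) := by
      field_simp at h ⊢
      linarith
    rw [hWval]
    rw [show 2*(k+1)+1 = 2*k+1+2 from by omega]
    field_simp
    ring

noncomputable def lc (k : ℕ) : ℝ := ((2*k).descFactorial k : ℝ) / (2^k * k.factorial)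

lemma descFac_mul (k : ℕ) : k.factorial * ((2*k).descFactorial k) = (2*k).factorial := by
  have h := Nat.factorial_mul_descFactorial (show k ≤ 2*k by omega)
  rwa [show 2*k-k = k by omega] at h

lemma descFac_pos (k : ℕ) : 0 < (2*k).descFactorial k := by
  rcases Nat.eq_zero_or_pos ((2*k).descFactorial k) with h | h
  · have := descFac_mul k
    rw [h, mul_zero] at this
    exact absurd this.symm (Nat.factorial_pos (2*k)).ne'
  · exact h

lemma lc_pos (k : ℕ) : 0 < lc k := by
  have h := descFac_pos k
  unfold lc
  positivity

lemma Wp_monic (k : ℕ) : (Wp k).Monic := by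
  have : (X^2 - 1 : Polynomial ℝ).Monic := by
    have := monic_X_pow_sub_C (1:ℝ) (two_ne_zero)
    rwa [C_1] at this
  exact this.pow k

lemma Wp_natDegree (k : ℕ) : (Wp k).natDegree = 2*k := by
  have : (X^2 - 1 : Polynomial ℝ).natDegree = 2 := by
    have := natDegree_X_pow_sub_C (n := 2) (r := (1:ℝ))
    rwa [C_1] at this
  have hm : (X^2 - 1 : Polynomial ℝ).Monic := by
    have := monic_X_pow_sub_C (1:ℝ) (two_ne_zero)
    rwa [C_1] at this
  rw [Wp, hm.natDegree_pow, this]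
  ring

lemma dkW_coeff (k : ℕ) : (derivative^[k] (Wp k)).coeff k = ((2*k).descFactorial k : ℝ) := by
  rw [coeff_iterate_derivative]
  have hc : (Wp k).coeff (k + k) = 1 := by
    have := (Wp_monic k).coeff_natDegree
    rwa [Wp_natDegree, two_mul] at this
  rw [hc, show k + k = 2*k from (two_mul k).symm]
  simp

lemma dkW_natDegree_le (k : ℕ) : (derivative^[k] (Wp k)).natDegree ≤ k := by
  have := natDegree_iterate_derivative (Wp k) k
  rwa [Wp_natDegree, show 2*k - k = k from by omega] at this

lemma legendre_coeff_self (k : ℕ) : (legendre k).coeff k = lc k := by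
  rw [show legendre k = ((1 : ℝ) / (2 ^ k * k.factorial)) • (derivative^[k] (Wp k)) from rfl,
    coeff_smul, dkW_coeff, smul_eq_mul, lc]
  ring

lemma legendre_natDegree (k : ℕ) : (legendre k).natDegree = k := by
  refine le_antisymm ((natDegree_smul_le _ _).trans (dkW_natDegree_le k)) ?_
  apply le_natDegree_of_ne_zero
  rw [legendre_coeff_self]
  exact (lc_pos k).ne'

lemma Ip_legendre_Xk (k : ℕ) :
    Ip (legendre k * X^k) = (-1:ℝ)^k / 2^k * Wint k := by
  rw [Ip_legendre_mul, iterate_derivative_X_pow_eq_smul,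
    Nat.sub_self, Nat.descFactorial_self, pow_zero]
  have : Wp k * ((k.factorial : ℝ) • 1) = (k.factorial : ℝ) • Wp k := by
    rw [mul_smul_comm, mul_one]
  rw [this, Ip_smul, ← Wint]
  have : (k.factorial : ℝ) ≠ 0 := by exact_mod_cast (Nat.factorial_pos k).ne'
  field_simp

lemma legendre_ne_zero (k : ℕ) : legendre k ≠ 0 := by
  intro h
  have := legendre_coeff_self k
  rw [h] at this
  simp at this
  exact (lc_pos k).ne' this.symm

lemma Ip_legendre_self (k : ℕ) : Ip (legendre k * legendre k) = 2 / (2*(k:ℝ)+1) := by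
  set q : Polynomial ℝ := legendre k - lc k • X^k with hq
  have hqcoeff : q.coeff k = 0 := by
    rw [hq]
    simp [legendre_coeff_self, coeff_smul, coeff_X_pow]
  have hqdeg : q.natDegree ≤ k := by
    rw [hq]
    refine (natDegree_sub_le _ _).trans ?_
    simp only [max_le_iff]
    exact ⟨(legendre_natDegree k).le, (natDegree_smul_le _ _).trans (natDegree_X_pow_le k)⟩
  have hzero : Ip (legendre k * q) = 0 := by
    by_cases h0 : q = 0
    · rw [h0, mul_zero, Ip_zero]
    · apply Ip_legendre_lowdeg
      rcases lt_or_eq_of_le hqdeg with h | h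
      · exact h
      · exfalso
        have hl : q.leadingCoeff ≠ 0 := leadingCoeff_ne_zero.mpr h0
        rw [leadingCoeff, h, hqcoeff] at hl
        exact hl rfl
  have hsplit : legendre k * legendre k
      = legendre k * q + lc k • (legendre k * X^k) := by
    rw [hq, mul_sub, mul_smul_comm]
    ring
  rw [hsplit, Ip_add, hzero, Ip_smul, Ip_legendre_Xk, Wint_eq, zero_add]
  have key : lc k * ((-1:ℝ)^k / 2^k * ((-1:ℝ)^k * 2^(2*k+1) * (k.factorial)^2
      / (2*k+1).factorial)) = 2 / (2*(k:ℝ)+1) := by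
    have hd : ((2*k).descFactorial k : ℝ) * (k.factorial : ℝ) = ((2*k).factorial : ℝ) := by
      rw [← Nat.cast_mul, mul_comm ((2*k).descFactorial k), descFac_mul]
    have hfact : ((2*k+1).factorial : ℝ) = (2*(k:ℝ)+1) * ((2*k).factorial : ℝ) := by
      rw [Nat.factorial_succ]; push_cast; ring
    have h1 : ((2*k).factorial : ℝ) ≠ 0 := by exact_mod_cast (Nat.factorial_pos _).ne'
    have h2 : (k.factorial : ℝ) ≠ 0 := by exact_mod_cast (Nat.factorial_pos _).ne'
    have h3 : (2*(k:ℝ)+1) ≠ 0 := by positivity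
    have hsq : ((-1:ℝ)^k) * ((-1:ℝ)^k) = 1 := by
      rw [← pow_add, Even.neg_one_pow ⟨k, rfl⟩]
    rw [lc, hfact, pow_add]
    field_simp
    linear_combination (2^(2*k)*((2*k).descFactorial k : ℝ)*(k.factorial:ℝ)) * hsq
      + (2^(2*k):ℝ) * hd
  rw [key]

lemma Ip_legendre_ortho {a b : ℕ} (h : a ≠ b) :
    Ip (legendre a * legendre b) = 0 := by
  rcases h.lt_or_gt with h | h
  · rw [mul_comm]
    exact Ip_legendre_lowdeg b _ (by rw [legendre_natDegree]; exact h)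
  · exact Ip_legendre_lowdeg a _ (by rw [legendre_natDegree]; exact h)

lemma iter_deriv_comp_neg (k : ℕ) : ∀ p : Polynomial ℝ,
    derivative^[k] (p.comp (-X)) = (-1:Polynomial ℝ)^k * (derivative^[k] p).comp (-X) := by
  induction k with
  | zero => intro p; simp
  | succ k ih =>
    intro p
    rw [Function.iterate_succ_apply, Function.iterate_succ_apply]
    have hd : derivative (p.comp (-X)) = -((derivative p).comp (-X)) := by
      rw [derivative_comp]
      simp
    rw [hd, iterate_derivative_neg, ih (derivative p), pow_succ]
    ring

lemma legendre_comp_neg (k : ℕ) :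
    (legendre k).comp (-X) = (-1:Polynomial ℝ)^k * legendre k := by
  have hW : (Wp k).comp (-X) = Wp k := by
    have hx2 : ((-X : Polynomial ℝ))^2 = X^2 := by ring
    simp [Wp, pow_comp, sub_comp, X_comp, one_comp, hx2]
  have h := iter_deriv_comp_neg k (Wp k)
  rw [hW] at h
  have h2 : (derivative^[k] (Wp k)).comp (-X) = (-1:Polynomial ℝ)^k * derivative^[k] (Wp k) := by
    have hsq : ((-1:Polynomial ℝ)^k) * ((-1:Polynomial ℝ)^k) = 1 := by
      rw [← pow_add, Even.neg_one_pow ⟨k, rfl⟩]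
    calc (derivative^[k] (Wp k)).comp (-X)
        = ((-1:Polynomial ℝ)^k * (-1:Polynomial ℝ)^k) * (derivative^[k] (Wp k)).comp (-X) := by
          rw [hsq, one_mul]
      _ = (-1:Polynomial ℝ)^k * derivative^[k] (Wp k) := by rw [mul_assoc, ← h]
  show (((1 : ℝ) / (2 ^ k * k.factorial)) • (derivative^[k] (Wp k))).comp (-X)
      = (-1:Polynomial ℝ)^k * legendre k
  rw [smul_comp, h2, ← mul_smul_comm]
  rfl

lemma eval_legendre_neg (k : ℕ) (x : ℝ) :
    (legendre k).eval (-x) = (-1:ℝ)^k * (legendre k).eval x := by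
  have := congrArg (eval x) (legendre_comp_neg k)
  rwa [eval_comp, eval_neg, eval_X, eval_mul, eval_pow, eval_neg, eval_one] at this

lemma Ip_parity (k d : ℕ) (h : Odd (k + d)) : Ip (legendre k * X^d) = 0 := by
  have hIp : Ip (legendre k * X^d) = ∫ x in (-1:ℝ)..1, (legendre k).eval x * x^d := by
    simp [Ip, eval_mul, eval_pow, eval_X]
  have hneg : ∀ x : ℝ, (legendre k).eval (-x) * (-x)^d
      = -((legendre k).eval x * x^d) := by
    intro x
    have hx : (-x)^d = (-1:ℝ)^d * x^d := by rw [neg_pow]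
    have hpm : ((-1:ℝ)^k) * ((-1:ℝ)^d) = -1 := by
      rw [← pow_add, Odd.neg_one_pow h]
    rw [eval_legendre_neg, hx]
    linear_combination ((legendre k).eval x * x^d) * hpm
  have hsub : (∫ x in (-1:ℝ)..1, (legendre k).eval (-x) * (-x)^d)
      = ∫ x in (-1:ℝ)..1, (legendre k).eval x * x^d := by
    rw [intervalIntegral.integral_comp_neg (fun x => (legendre k).eval x * x^d)]
    norm_num
  rw [hIp]
  have : (∫ x in (-1:ℝ)..1, (legendre k).eval x * x^d)
      = -∫ x in (-1:ℝ)..1, (legendre k).eval x * x^d := by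
    conv_lhs => rw [← hsub]
    simp only [hneg]
    rw [intervalIntegral.integral_neg]
  linarith

lemma legendre_zero_eq : legendre 0 = 1 := by
  norm_num [legendre]

lemma expand : ∀ (d : ℕ) (p : Polynomial ℝ), p.natDegree ≤ d →
    ∃ β : ℕ → ℝ, p = ∑ l ∈ Finset.range (d+1), β l • legendre l := by
  intro d
  induction d with
  | zero =>
    intro p hp
    refine ⟨fun _ => p.coeff 0, ?_⟩
    rw [Finset.sum_range_one, legendre_zero_eq, smul_eq_C_mul, mul_one]
    exact eq_C_of_natDegree_le_zero hp
  | succ d ih =>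
    intro p hp
    set a : ℝ := p.coeff (d+1) / lc (d+1) with ha
    set q := p - a • legendre (d+1) with hqdef
    have hlc : lc (d+1) ≠ 0 := (lc_pos (d+1)).ne'
    have hcoeff : q.coeff (d+1) = 0 := by
      rw [hqdef, coeff_sub, coeff_smul, legendre_coeff_self, smul_eq_mul, ha]
      field_simp
      ring
    have h1 : q.natDegree ≤ d+1 := by
      rw [hqdef]
      refine (natDegree_sub_le _ _).trans ?_
      simp only [max_le_iff]
      exact ⟨hp, (natDegree_smul_le _ _).trans (legendre_natDegree (d+1)).le⟩
    have hqd : q.natDegree ≤ d := by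
      rw [natDegree_le_iff_coeff_eq_zero] at h1 ⊢
      intro m hm
      rcases eq_or_lt_of_le (Nat.succ_le_of_lt hm) with h | h
      · rw [← h]; exact hcoeff
      · exact h1 m (by omega)
    obtain ⟨β, hβ⟩ := ih q hqd
    refine ⟨fun l => if l = d+1 then a else β l, ?_⟩
    rw [Finset.sum_range_succ]
    simp only [if_pos rfl]
    have hs : ∑ l ∈ Finset.range (d+1), (if l = d+1 then a else β l) • legendre l
        = ∑ l ∈ Finset.range (d+1), β l • legendre l :=
      Finset.sum_congr rfl (fun l hl => by
        rw [if_neg (by have := Finset.mem_range.mp hl; omega)])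
    rw [hs, ← hβ, hqdef]
    simp

lemma Fmat_eq_s15 (i j : ℕ) : Fmat i j = Ip (legendre (i-1) * X^(j-1)) := by
  simp [Fmat, Ip, eval_mul, eval_pow, eval_X]

lemma beta_eq (m : ℕ) (β : ℕ → ℝ)
    (hβ : (X : Polynomial ℝ)^m = ∑ l ∈ Finset.range (m+1), β l • legendre l)
    (k : ℕ) (hk : k ∈ Finset.range (m+1)) :
    β k = (2*(k:ℝ)+1)/2 * Fmat (k+1) (m+1) := by
  have h1 : Ip (legendre k * X^m) = β k * (2/(2*(k:ℝ)+1)) := by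
    conv_lhs => rw [hβ]
    rw [Finset.mul_sum]
    simp_rw [mul_smul_comm]
    rw [Ip_sum]
    simp_rw [Ip_smul]
    rw [Finset.sum_eq_single_of_mem k hk (fun l _ hne => by
      rw [Ip_legendre_ortho (fun h => hne h.symm), mul_zero])]
    rw [Ip_legendre_self]
  have h2 : Fmat (k+1) (m+1) = Ip (legendre k * X^m) := by
    rw [Fmat_eq_s15]; simp
  have h3 : (2*(k:ℝ)+1) ≠ 0 := by positivity
  rw [h2, h1]
  field_simp

lemma moment_eq (m d : ℕ) (β : ℕ → ℝ)
    (hβ : (X : Polynomial ℝ)^m = ∑ l ∈ Finset.range (m+1), β l • legendre l) :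
    Ip (X^(m+d)) = ∑ l ∈ Finset.range (m+1), β l * Fmat (l+1) (d+1) := by
  have h : (X:Polynomial ℝ)^(m+d) = ∑ l ∈ Finset.range (m+1), β l • (legendre l * X^d) := by
    rw [pow_add]
    conv_lhs => rw [hβ]
    rw [Finset.sum_mul]
    simp_rw [smul_mul_assoc]
  rw [h, Ip_sum]
  refine Finset.sum_congr rfl (fun l _ => ?_)
  rw [Ip_smul, Fmat_eq_s15]
  simp

lemma int_zpow (r : ℝ) (K : ℕ) : (∫ z in (-r)..r, z^K) = r^(K+1) * Ip (X^K) := by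
  rw [integral_pow, Ip_pow,
    show (-r)^(K+1) = (-1:ℝ)^(K+1) * r^(K+1) from by rw [neg_pow]]
  have : ((K:ℝ)+1) ≠ 0 := by positivity
  field_simp

/-- Theorem 2 (dipole moments of higher orders of a conducting ball).
Under the same hypotheses (with b_i := 0 for i > n+1), for every natural m,
∫_{-r}^{r} z^m Σ_j c_j z^{j-1} dz
  = (r^{m+1}/2) Σ_{i=δ,(2)}^{m+1} (2i-1) r^{i-1} F_{i,m+1} b_i,
where the sum runs over 1 ≤ i ≤ m+1 with i ≡ m+1 (mod 2)
(δ = 1 for even m, δ = 2 for odd m). -/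
theorem stmt_15 (r : ℝ) (hr : 0 < r) (n : ℕ) (b c : ℕ → ℝ)
    (hb0 : ∀ i, n + 1 < i → b i = 0)
    (hsys : ∀ i, 1 ≤ i → i ≤ n + 1 →
      (∑ j ∈ Finset.Icc 1 (n + 1), Fmat i j * r ^ (j - 1) * c j) = r ^ (i - 1) * b i)
    (m : ℕ) :
    (∫ z in (-r)..r, z ^ m * ∑ j ∈ Finset.Icc 1 (n + 1), c j * z ^ (j - 1)) =
      (r ^ (m + 1) / 2) *
        ∑ i ∈ (Finset.Icc 1 (m + 1)).filter (fun i => i % 2 = (m + 1) % 2),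
          (2 * (i : ℝ) - 1) * r ^ (i - 1) * Fmat i (m + 1) * b i := by
  obtain ⟨β, hβ⟩ := expand m (X^m) (by rw [natDegree_X_pow])
  set S := Finset.Icc 1 (n+1) with hS
  -- Step 1: compute the integral as a sum of monomial integrals
  have step1 : (∫ z in (-r)..r, z ^ m * ∑ j ∈ S, c j * z ^ (j - 1))
      = ∑ j ∈ S, c j * (r^(m+(j-1)+1) * Ip (X^(m+(j-1)))) := by
    have hfun : ∀ z : ℝ, z ^ m * ∑ j ∈ S, c j * z ^ (j - 1)
        = ∑ j ∈ S, c j * z ^ (m+(j-1)) := by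
      intro z
      rw [Finset.mul_sum]
      exact Finset.sum_congr rfl (fun j _ => by rw [pow_add]; ring)
    simp only [hfun]
    rw [intervalIntegral.integral_finset_sum (f := fun j (z : ℝ) => c j * z ^ (m+(j-1))) (fun j _ =>
      ((continuous_const.mul (continuous_pow _)).intervalIntegrable _ _))]
    exact Finset.sum_congr rfl (fun j _ => by
      rw [intervalIntegral.integral_const_mul, int_zpow])
  -- Step 2: moments via Legendre expansion and swap sums
  have step2 : (∑ j ∈ S, c j * (r^(m+(j-1)+1) * Ip (X^(m+(j-1)))))
      = ∑ l ∈ Finset.range (m+1), (β l * r^(m+1)) *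
          (∑ j ∈ S, Fmat (l+1) j * r^(j-1) * c j) := by
    have hterm : ∀ j ∈ S, c j * (r^(m+(j-1)+1) * Ip (X^(m+(j-1))))
        = ∑ l ∈ Finset.range (m+1), (β l * r^(m+1)) * (Fmat (l+1) j * r^(j-1) * c j) := by
      intro j hj
      have hj1 : 1 ≤ j := (Finset.mem_Icc.mp hj).1
      rw [moment_eq m (j-1) β hβ, Finset.mul_sum, Finset.mul_sum]
      refine Finset.sum_congr rfl (fun l _ => ?_)
      rw [show (j-1)+1 = j from by omega,
        show r^(m+(j-1)+1) = r^(m+1) * r^(j-1) from by rw [← pow_add]; congr 1; omega]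
      ring
    rw [Finset.sum_congr rfl hterm, Finset.sum_comm]
    exact Finset.sum_congr rfl (fun l _ => (Finset.mul_sum _ _ _).symm)
  -- Step 3: the linear system / orthogonality evaluates the inner sum
  have step3 : ∀ l ∈ Finset.range (m+1),
      (∑ j ∈ S, Fmat (l+1) j * r^(j-1) * c j) = r^l * b (l+1) := by
    intro l _
    by_cases hl : l + 1 ≤ n + 1
    · have h := hsys (l+1) (by omega) hl
      rwa [show (l+1)-1 = l from rfl] at h
    · have hz : ∀ j ∈ S, Fmat (l+1) j * r^(j-1) * c j = 0 := by
        intro j hj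
        have hj2 : j ≤ n + 1 := (Finset.mem_Icc.mp hj).2
        have : Fmat (l+1) j = 0 := by
          rw [Fmat_eq_s15, show (l+1)-1 = l from rfl]
          exact Ip_legendre_lowdeg l _ ((natDegree_X_pow_le _).trans_lt (by omega))
        rw [this, zero_mul, zero_mul]
      rw [Finset.sum_eq_zero hz, hb0 (l+1) (by omega), mul_zero]
  -- Step 4: identify the expansion coefficients
  have step4 : ∀ l ∈ Finset.range (m+1),
      (β l * r^(m+1)) * (r^l * b (l+1))
        = (r^(m+1)/2) * ((2*((l:ℝ)+1) - 1) * r^l * Fmat (l+1) (m+1) * b (l+1)) := by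
    intro l hl
    rw [beta_eq m β hβ l hl]
    ring
  -- Step 5: remove the parity filter on the right-hand side
  have step5 : (∑ i ∈ (Finset.Icc 1 (m + 1)).filter (fun i => i % 2 = (m + 1) % 2),
        (2 * (i : ℝ) - 1) * r ^ (i - 1) * Fmat i (m + 1) * b i)
      = ∑ i ∈ Finset.Icc 1 (m + 1),
        (2 * (i : ℝ) - 1) * r ^ (i - 1) * Fmat i (m + 1) * b i := by
    refine Finset.sum_filter_of_ne (fun i hi hne => ?_)
    by_contra hpar
    have hi1 : 1 ≤ i := (Finset.mem_Icc.mp hi).1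
    have hodd : Odd ((i-1) + m) := by
      rw [Nat.odd_iff]
      omega
    have : Fmat i (m+1) = 0 := by
      rw [Fmat_eq_s15, show (m+1)-1 = m from rfl]
      exact Ip_parity (i-1) m hodd
    exact hne (by rw [this]; ring)
  -- Step 6: reindex the right-hand side and conclude
  have hIcc : Finset.Icc 1 (m+1)
      = Finset.map ⟨fun l => l + 1, add_left_injective 1⟩ (Finset.range (m+1)) := by
    ext x
    simp only [Finset.mem_Icc, Finset.mem_map, Finset.mem_range, Function.Embedding.coeFn_mk]
    constructor
    · intro h; exact ⟨x - 1, by omega, by omega⟩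
    · rintro ⟨l, hl, rfl⟩; omega
  rw [step1, step2, step5, hIcc, Finset.sum_map, Finset.mul_sum]
  refine Finset.sum_congr rfl (fun l hl => ?_)
  simp only [Function.Embedding.coeFn_mk]
  rw [step3 l hl, step4 l hl, show l + 1 - 1 = l from by omega]
  push_cast
  ring
end
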